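/- Let {X_n}_{n≥0} be a sequence of zero-mean random variables with finite second moments on a probability space. Suppose there is κ > 0 such that for all m ≥ 0 and n ≥ 1, E(Σ_{k=m}^{m+n-1} X_k)² ≪ (m+n)^κ − m^κ. Then for any δ > 0, almost surely Σ_{k=0}^{n-1} X_k = o(n^{κ/2 + δ}). -/

import Mathlib

open MeasureTheory Filter Finset

section GKAux
variable {Ω : Type*}

noncomputable def GKS (X : ℕ → Ω → ℝ) (m n : ℕ) (ω : Ω) : ℝ :=
  ∑ k ∈ Finset.Ico m n, X k ω

noncomputable def GKR (X : ℕ → Ω → ℝ) (a p l : ℕ) (ω : Ω) : ℝ :=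
  Real.sqrt (∑ i ∈ Finset.range (2 ^ (p - l)),
    (GKS X (a + i * 2 ^ l) (a + (i + 1) * 2 ^ l) ω) ^ 2)

lemma GKR_nonneg (X : ℕ → Ω → ℝ) (a p l : ℕ) (ω : Ω) : 0 ≤ GKR X a p l ω :=
  Real.sqrt_nonneg _

lemma GKR_mono (X : ℕ → Ω → ℝ) {a p l : ℕ} (ω : Ω) :
    GKR X a p l ω ≤ GKR X a (p + 1) l ω := by
  apply Real.sqrt_le_sqrt
  apply Finset.sum_le_sum_of_subset_of_nonneg
  · exact Finset.range_subset_range.2 (Nat.pow_le_pow_right (by norm_num) (by omega))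
  · intro i _ _; positivity

lemma GKR_shift (X : ℕ → Ω → ℝ) {a p l : ℕ} (hl : l ≤ p) (ω : Ω) :
    GKR X (a + 2 ^ p) p l ω ≤ GKR X a (p + 1) l ω := by
  apply Real.sqrt_le_sqrt
  have h2 : 2 ^ (p - l) * 2 ^ l = 2 ^ p := by rw [← pow_add]; congr 1; omega
  set n := 2 ^ (p - l) with hn
  set f : ℕ → ℝ := fun j => (GKS X (a + j * 2 ^ l) (a + (j + 1) * 2 ^ l) ω) ^ 2 with hf
  have hrw : ∀ i : ℕ,
      (GKS X (a + 2 ^ p + i * 2 ^ l) (a + 2 ^ p + (i + 1) * 2 ^ l) ω) ^ 2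
        = f (n + i) := by
    intro i
    simp only [hf]
    congr 2 <;> · simp only [add_mul, one_mul, hn, h2]; rw [← pow_add, Nat.sub_add_cancel hl]; ring
  calc ∑ i ∈ Finset.range n,
        (GKS X (a + 2 ^ p + i * 2 ^ l) (a + 2 ^ p + (i + 1) * 2 ^ l) ω) ^ 2
      = ∑ i ∈ Finset.range n, f (n + i) := by
        exact Finset.sum_congr rfl fun i _ => hrw i
    _ = ∑ i ∈ Finset.Ico n (n + n), f i := by
        rw [Finset.sum_Ico_eq_sum_range]; simp
    _ ≤ ∑ i ∈ Finset.range (2 ^ (p + 1 - l)), f i := by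
        apply Finset.sum_le_sum_of_subset_of_nonneg
        · rw [Finset.range_eq_Ico]
          apply Finset.Ico_subset_Ico (Nat.zero_le _)
          have : 2 ^ (p + 1 - l) = n + n := by
            rw [hn, ← two_mul, ← pow_succ']; congr 1; omega
          omega
        · intro i _ _; positivity

/-- Key pointwise dyadic chaining bound. -/
lemma GK_key (X : ℕ → Ω → ℝ) (p : ℕ) : ∀ a t : ℕ, t < 2 ^ p → ∀ ω : Ω,
    |GKS X a (a + t) ω| ≤ ∑ l ∈ Finset.range p, GKR X a p l ω := by
  induction p with
  | zero =>
      intro a t ht ω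
      interval_cases t
      simp [GKS]
  | succ p ih =>
      intro a t ht ω
      by_cases h : t < 2 ^ p
      · calc |GKS X a (a + t) ω| ≤ ∑ l ∈ Finset.range p, GKR X a p l ω := ih a t h ω
          _ ≤ ∑ l ∈ Finset.range p, GKR X a (p + 1) l ω :=
              Finset.sum_le_sum fun l _ => GKR_mono X ω
          _ ≤ ∑ l ∈ Finset.range (p + 1), GKR X a (p + 1) l ω := by
              rw [Finset.sum_range_succ]
              exact le_add_of_nonneg_right (GKR_nonneg _ _ _ _ _)
      · push_neg at h
        have hsplit : GKS X a (a + t) ω = GKS X a (a + 2 ^ p) ω + GKS X (a + 2 ^ p) (a + t) ω := by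
          rw [GKS, GKS, GKS, Finset.sum_Ico_consecutive] <;> omega
        have h1 : |GKS X a (a + 2 ^ p) ω| ≤ GKR X a (p + 1) p ω := by
          rw [← Real.sqrt_sq_eq_abs]
          apply Real.sqrt_le_sqrt
          have : 2 ^ (p + 1 - p) = 2 := by
            have : p + 1 - p = 1 := by omega
            rw [this]; rfl
          rw [this, Finset.sum_range_succ, Finset.sum_range_one]
          simp only [zero_mul, add_zero, zero_add, one_mul]
          exact le_add_of_nonneg_right (sq_nonneg _)
        have h2 : |GKS X (a + 2 ^ p) (a + t) ω| ≤ ∑ l ∈ Finset.range p, GKR X a (p + 1) l ω := by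
          have ht' : t - 2 ^ p < 2 ^ p := by
            have : 2 ^ (p + 1) = 2 ^ p + 2 ^ p := by rw [pow_succ]; ring
            omega
          have hat : a + 2 ^ p + (t - 2 ^ p) = a + t := by omega
          calc |GKS X (a + 2 ^ p) (a + t) ω|
              = |GKS X (a + 2 ^ p) (a + 2 ^ p + (t - 2 ^ p)) ω| := by rw [hat]
            _ ≤ ∑ l ∈ Finset.range p, GKR X (a + 2 ^ p) p l ω := ih _ _ ht' ω
            _ ≤ ∑ l ∈ Finset.range p, GKR X a (p + 1) l ω :=
                Finset.sum_le_sum fun l hl => GKR_shift X (by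
                  exact Nat.le_of_lt_succ (Nat.lt_succ_of_lt (Finset.mem_range.1 hl))) ω
        calc |GKS X a (a + t) ω| ≤ |GKS X a (a + 2 ^ p) ω| + |GKS X (a + 2 ^ p) (a + t) ω| := by
              rw [hsplit]; exact abs_add_le _ _
          _ ≤ (∑ l ∈ Finset.range p, GKR X a (p + 1) l ω) + GKR X a (p + 1) p ω := by
              rw [add_comm (∑ l ∈ Finset.range p, GKR X a (p + 1) l ω)]
              exact add_le_add h1 h2
          _ = ∑ l ∈ Finset.range (p + 1), GKR X a (p + 1) l ω := (Finset.sum_range_succ _ _).symm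

end GKAux

/-- Gal–Koksma theorem (special case): if a zero-mean, square-integrable process
satisfies `E(Σ_{k=m}^{m+n-1} X_k)² ≪ (m+n)^κ − m^κ`, then for any `δ > 0`,
almost surely `Σ_{k=0}^{n-1} X_k = o(n^{κ/2+δ})`. -/
theorem gal_koksma {Ω : Type*} [MeasurableSpace Ω] (μ : Measure Ω)
    [IsProbabilityMeasure μ] (X : ℕ → Ω → ℝ)
    (hmem : ∀ k, MemLp (X k) 2 μ)
    (hmean : ∀ k, ∫ ω, X k ω ∂μ = 0)
    (κ : ℝ) (hκ : 0 < κ)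
    (hvar : ∃ C : ℝ, 0 < C ∧ ∀ m n : ℕ, 1 ≤ n →
      ∫ ω, (∑ k ∈ Finset.Ico m (m + n), X k ω) ^ 2 ∂μ ≤
        C * ((m + n : ℝ) ^ κ - (m : ℝ) ^ κ)) :
    ∀ δ : ℝ, 0 < δ →
      ∀ᵐ ω ∂μ, Tendsto
        (fun n : ℕ => (∑ k ∈ Finset.range n, X k ω) / (n : ℝ) ^ (κ / 2 + δ))
        atTop (nhds 0) := by
  obtain ⟨C, hC, hvar⟩ := hvar
  intro δ hδ
  set α : ℝ := κ / 2 + δ with hα_def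
  have hα : 0 < α := by positivity
  -- basic integrability
  have hSmem : ∀ a b : ℕ, MemLp (GKS X a b) 2 μ := fun a b =>
    memLp_finsetSum _ (fun k _ => hmem k)
  have hsq_int : ∀ a b : ℕ, Integrable (fun ω => (GKS X a b ω) ^ 2) μ := fun a b =>
    (hSmem a b).integrable_sq
  -- variance bound, all n
  have hvar' : ∀ m n : ℕ, ∫ ω, (GKS X m (m + n) ω) ^ 2 ∂μ ≤
      C * (((m + n : ℕ) : ℝ) ^ κ - ((m : ℕ) : ℝ) ^ κ) := by
    intro m n
    rcases Nat.eq_zero_or_pos n with h | h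
    · subst h
      simp only [Nat.add_zero, GKS, Finset.Ico_self, Finset.sum_empty, sub_self, mul_zero]
      norm_num
    · have := hvar m n h
      calc ∫ ω, (GKS X m (m + n) ω) ^ 2 ∂μ
          = ∫ ω, (∑ k ∈ Finset.Ico m (m + n), X k ω) ^ 2 ∂μ := rfl
        _ ≤ C * ((m + n : ℝ) ^ κ - (m : ℝ) ^ κ) := this
        _ = C * (((m + n : ℕ) : ℝ) ^ κ - ((m : ℕ) : ℝ) ^ κ) := by push_cast; ring
  -- telescoping integral bound at one level
  have htel : ∀ p l : ℕ, l ≤ p →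
      ∫ ω, (∑ i ∈ Finset.range (2 ^ (p - l)),
        (GKS X (0 + i * 2 ^ l) (0 + (i + 1) * 2 ^ l) ω) ^ 2) ∂μ ≤
      C * ((2 ^ p : ℕ) : ℝ) ^ κ := by
    intro p l hl
    rw [MeasureTheory.integral_finset_sum _ (fun i _ => hsq_int _ _)]
    set f : ℕ → ℝ := fun i => ((i * 2 ^ l : ℕ) : ℝ) ^ κ with hf
    calc ∑ i ∈ Finset.range (2 ^ (p - l)),
          ∫ ω, (GKS X (0 + i * 2 ^ l) (0 + (i + 1) * 2 ^ l) ω) ^ 2 ∂μ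
        ≤ ∑ i ∈ Finset.range (2 ^ (p - l)), C * (f (i + 1) - f i) := by
          apply Finset.sum_le_sum
          intro i _
          have h0 : (0 : ℕ) + i * 2 ^ l = i * 2 ^ l := by omega
          have h1 : (0 : ℕ) + (i + 1) * 2 ^ l = i * 2 ^ l + 2 ^ l := by ring_nf
          have h2 : (i + 1) * 2 ^ l = i * 2 ^ l + 2 ^ l := by ring
          rw [h0, h1]
          have := hvar' (i * 2 ^ l) (2 ^ l)
          simp only [hf]
          rw [h2]
          exact this
      _ = C * (f (2 ^ (p - l)) - f 0) := by
          rw [← Finset.mul_sum, Finset.sum_range_sub f]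
      _ = C * ((2 ^ p : ℕ) : ℝ) ^ κ := by
          have hN : 2 ^ (p - l) * 2 ^ l = 2 ^ p := by rw [← pow_add]; congr 1; omega
          simp only [hf, hN, Nat.zero_mul, Nat.cast_zero]
          rw [Real.zero_rpow hκ.ne']
          ring
  -- dominating quantities
  set Z : ℕ → Ω → ℝ := fun p ω => ∑ l ∈ Finset.range p,
    (∑ i ∈ Finset.range (2 ^ (p - l)),
      (GKS X (0 + i * 2 ^ l) (0 + (i + 1) * 2 ^ l) ω) ^ 2) with hZ_def
  set Y : ℕ → Ω → ℝ := fun p ω => ∑ l ∈ Finset.range p, GKR X 0 p l ω with hY_def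
  have hY_nonneg : ∀ p ω, 0 ≤ Y p ω := fun p ω =>
    Finset.sum_nonneg fun l _ => GKR_nonneg X 0 p l ω
  have hZ_nonneg : ∀ p ω, 0 ≤ Z p ω := fun p ω =>
    Finset.sum_nonneg fun l _ => Finset.sum_nonneg fun i _ => sq_nonneg _
  have hZ_int : ∀ p, Integrable (Z p) μ := fun p =>
    MeasureTheory.integrable_finset_sum _ fun l _ =>
      MeasureTheory.integrable_finset_sum _ fun i _ => hsq_int _ _
  have hZ_integral : ∀ p : ℕ, ∫ ω, Z p ω ∂μ ≤ (p : ℝ) * (C * ((2 ^ p : ℕ) : ℝ) ^ κ) := by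
    intro p
    rw [hZ_def]
    rw [MeasureTheory.integral_finset_sum _ (fun l _ =>
      MeasureTheory.integrable_finset_sum _ fun i _ => hsq_int _ _)]
    calc ∑ l ∈ Finset.range p, ∫ ω, (∑ i ∈ Finset.range (2 ^ (p - l)),
            (GKS X (0 + i * 2 ^ l) (0 + (i + 1) * 2 ^ l) ω) ^ 2) ∂μ
        ≤ ∑ l ∈ Finset.range p, C * ((2 ^ p : ℕ) : ℝ) ^ κ :=
          Finset.sum_le_sum fun l hl => htel p l (Nat.le_of_lt_succ
            (Nat.lt_succ_of_lt (Finset.mem_range.1 hl)))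
      _ = (p : ℝ) * (C * ((2 ^ p : ℕ) : ℝ) ^ κ) := by
          rw [Finset.sum_const, Finset.card_range, nsmul_eq_mul]
  have hYsq : ∀ p ω, (Y p ω) ^ 2 ≤ (p : ℝ) * Z p ω := by
    intro p ω
    calc (Y p ω) ^ 2 ≤ (Finset.range p).card * ∑ l ∈ Finset.range p, (GKR X 0 p l ω) ^ 2 :=
          sq_sum_le_card_mul_sum_sq
      _ = (p : ℝ) * Z p ω := by
          rw [Finset.card_range]
          congr 1
          apply Finset.sum_congr rfl
          intro l _
          rw [GKR, Real.sq_sqrt (Finset.sum_nonneg fun i _ => sq_nonneg _)]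
  -- Chebyshev
  have cheb : ∀ (p : ℕ) (lam : ℝ), 0 < lam →
      μ {ω | lam < Y p ω} ≤ ENNReal.ofReal ((p : ℝ) ^ 2 * (C * ((2 ^ p : ℕ) : ℝ) ^ κ) / lam ^ 2) := by
    intro p lam hlam
    have hsub : {ω | lam < Y p ω} ⊆ {ω | lam ^ 2 ≤ (p : ℝ) * Z p ω} := by
      intro ω hω
      simp only [Set.mem_setOf_eq] at *
      nlinarith [hYsq p ω, hY_nonneg p ω]
    have hWint : Integrable (fun ω => (p : ℝ) * Z p ω) μ := (hZ_int p).const_mul _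
    have hmarkov := MeasureTheory.mul_meas_ge_le_integral_of_nonneg
      (ae_of_all μ fun ω => mul_nonneg (Nat.cast_nonneg p) (hZ_nonneg p ω)) hWint (lam ^ 2)
    have hint : ∫ ω, (p : ℝ) * Z p ω ∂μ ≤ (p : ℝ) ^ 2 * (C * ((2 ^ p : ℕ) : ℝ) ^ κ) := by
      rw [MeasureTheory.integral_const_mul]
      calc (p : ℝ) * ∫ ω, Z p ω ∂μ ≤ (p : ℝ) * ((p : ℝ) * (C * ((2 ^ p : ℕ) : ℝ) ^ κ)) := by
            apply mul_le_mul_of_nonneg_left (hZ_integral p) (Nat.cast_nonneg p)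
        _ = (p : ℝ) ^ 2 * (C * ((2 ^ p : ℕ) : ℝ) ^ κ) := by ring
    calc μ {ω | lam < Y p ω} ≤ μ {ω | lam ^ 2 ≤ (p : ℝ) * Z p ω} := measure_mono hsub
      _ = ENNReal.ofReal ((μ {ω | lam ^ 2 ≤ (p : ℝ) * Z p ω}).toReal) :=
          (ENNReal.ofReal_toReal (measure_ne_top μ _)).symm
      _ ≤ ENNReal.ofReal ((p : ℝ) ^ 2 * (C * ((2 ^ p : ℕ) : ℝ) ^ κ) / lam ^ 2) := by
          apply ENNReal.ofReal_le_ofReal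
          rw [le_div_iff₀ (by positivity)]
          calc (μ {ω | lam ^ 2 ≤ (p : ℝ) * Z p ω}).toReal * lam ^ 2
              = lam ^ 2 * (μ {ω | lam ^ 2 ≤ (p : ℝ) * Z p ω}).toReal := by ring
            _ ≤ ∫ ω, (p : ℝ) * Z p ω ∂μ := hmarkov
            _ ≤ (p : ℝ) ^ 2 * (C * ((2 ^ p : ℕ) : ℝ) ^ κ) := hint
  -- geometric ratio
  set r : ℝ := (2 : ℝ) ^ (-(2 * δ)) with hr_def
  have hr_pos : 0 < r := Real.rpow_pos_of_pos (by norm_num) _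
  have hr_lt : r < 1 := Real.rpow_lt_one_of_one_lt_of_neg (by norm_num) (by linarith)
  have hsum : Summable (fun j : ℕ => ((j : ℝ) + 2) ^ 2 * r ^ j) := by
    have hnorm : ‖r‖ < 1 := by rw [Real.norm_eq_abs, abs_of_pos hr_pos]; exact hr_lt
    have h2 := summable_pow_mul_geometric_of_norm_lt_one 2 hnorm
    have h1 := summable_pow_mul_geometric_of_norm_lt_one 1 hnorm
    have h0 := summable_pow_mul_geometric_of_norm_lt_one 0 hnorm
    apply Summable.congr (h2.add ((h1.mul_left 4).add (h0.mul_left 4)))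
    intro j
    push_cast
    ring
  -- Borel-Cantelli for each ε = 1/(m+1)
  have BC : ∀ m : ℕ, ∀ᵐ ω ∂μ, ∀ᶠ j in atTop,
      Y (j + 2) ω ≤ (1 / ((m : ℝ) + 1)) * ((2 ^ j : ℕ) : ℝ) ^ α := by
    intro m
    set epsm : ℝ := 1 / ((m : ℝ) + 1) with hepsm_def
    have hepsm : 0 < epsm := by positivity
    set K : ℝ := C * (2 : ℝ) ^ (2 * κ) / epsm ^ 2 with hK_def
    have hK : 0 ≤ K := by
      apply div_nonneg _ (sq_nonneg _)
      exact mul_nonneg hC.le (Real.rpow_pos_of_pos (by norm_num) _).le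
    have hlam : ∀ j : ℕ, 0 < epsm * ((2 ^ j : ℕ) : ℝ) ^ α := by
      intro j
      apply mul_pos hepsm
      apply Real.rpow_pos_of_pos
      positivity
    have hpow2 : ∀ (n : ℕ) (c : ℝ), ((2 ^ n : ℕ) : ℝ) ^ c = (2 : ℝ) ^ ((n : ℝ) * c) := by
      intro n c
      push_cast
      rw [← Real.rpow_natCast (2 : ℝ) n, ← Real.rpow_mul (by norm_num)]
    have hb : ∀ j : ℕ,
        ((j + 2 : ℕ) : ℝ) ^ 2 * (C * ((2 ^ (j + 2) : ℕ) : ℝ) ^ κ) /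
          (epsm * ((2 ^ j : ℕ) : ℝ) ^ α) ^ 2
        = K * (((j : ℝ) + 2) ^ 2 * r ^ j) := by
      intro j
      have e1 : ((2 ^ (j + 2) : ℕ) : ℝ) ^ κ = (2 : ℝ) ^ (((j : ℝ) + 2) * κ) := by
        rw [hpow2]; push_cast; ring_nf
      have e2 : (((2 ^ j : ℕ) : ℝ) ^ α) ^ 2 = (2 : ℝ) ^ ((j : ℝ) * α * 2) := by
        rw [hpow2, ← Real.rpow_natCast ((2 : ℝ) ^ ((j : ℝ) * α)) 2,
          ← Real.rpow_mul (by norm_num)]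
        norm_num
      have e3 : r ^ j = (2 : ℝ) ^ (-(2 * δ) * (j : ℝ)) := by
        rw [hr_def, ← Real.rpow_natCast ((2 : ℝ) ^ (-(2 * δ))) j,
          ← Real.rpow_mul (by norm_num)]
      have emain : (2 : ℝ) ^ (((j : ℝ) + 2) * κ)
          = (2 : ℝ) ^ ((j : ℝ) * α * 2) * ((2 : ℝ) ^ (2 * κ) * r ^ j) := by
        rw [e3, ← Real.rpow_add (by norm_num), ← Real.rpow_add (by norm_num)]
        congr 1
        rw [hα_def]
        ring
      rw [mul_pow, e1, e2, emain]
      have h2pos : (0 : ℝ) < (2 : ℝ) ^ ((j : ℝ) * α * 2) := Real.rpow_pos_of_pos (by norm_num) _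
      rw [hK_def]
      field_simp
      push_cast
      ring
    set A : ℕ → Set Ω := fun j => {ω | epsm * ((2 ^ j : ℕ) : ℝ) ^ α < Y (j + 2) ω} with hA_def
    have hA : ∀ j, μ (A j) ≤ ENNReal.ofReal (K * (((j : ℝ) + 2) ^ 2 * r ^ j)) := by
      intro j
      have := cheb (j + 2) _ (hlam j)
      rw [hb j] at this
      exact this
    have hne : (∑' j, μ (A j)) ≠ ⊤ := by
      apply ne_top_of_le_ne_top _ (ENNReal.tsum_le_tsum hA)
      rw [← ENNReal.ofReal_tsum_of_nonneg
        (fun j => mul_nonneg hK (mul_nonneg (sq_nonneg _) (pow_nonneg hr_pos.le _)))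
        (hsum.mul_left K)]
      exact ENNReal.ofReal_ne_top
    filter_upwards [MeasureTheory.ae_eventually_notMem hne] with ω hω
    apply hω.mono
    intro j hj
    simpa [hA_def, Set.mem_setOf_eq, not_lt] using hj
  -- conclusion
  filter_upwards [ae_all_iff.2 BC] with ω hω
  rw [NormedAddCommGroup.tendsto_nhds_zero]
  intro ε hε
  obtain ⟨m, hm⟩ := exists_nat_one_div_lt hε
  obtain ⟨J, hJ⟩ := Filter.eventually_atTop.1 (hω m)
  rw [Filter.eventually_atTop]
  refine ⟨2 ^ J, fun n hn => ?_⟩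
  have hn0 : 0 < n := lt_of_lt_of_le (Nat.pow_pos (by norm_num)) hn
  set j := Nat.log 2 n with hj_def
  have hj1 : 2 ^ j ≤ n := Nat.pow_log_le_self 2 hn0.ne'
  have hj2 : n < 2 ^ (j + 2) :=
    lt_of_lt_of_le (Nat.lt_pow_succ_log_self (by norm_num) n)
      (Nat.pow_le_pow_right (by norm_num) (by omega))
  have hjJ : J ≤ j := (Nat.le_log_iff_pow_le (by norm_num) hn0.ne').2 hn
  have hkey : |GKS X 0 n ω| ≤ Y (j + 2) ω := by
    rw [hY_def]
    have := GK_key X (j + 2) 0 n hj2 ω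
    rwa [zero_add] at this
  have hnpos : (0 : ℝ) < (n : ℝ) := by exact_mod_cast hn0
  have hrpow : (0 : ℝ) < (n : ℝ) ^ α := Real.rpow_pos_of_pos hnpos _
  have hcast : ((2 ^ j : ℕ) : ℝ) ^ α ≤ (n : ℝ) ^ α :=
    Real.rpow_le_rpow (by positivity) (by exact_mod_cast hj1) hα.le
  have hfin : |GKS X 0 n ω| ≤ (1 / ((m : ℝ) + 1)) * (n : ℝ) ^ α :=
    hkey.trans ((hJ j hjJ).trans
      (mul_le_mul_of_nonneg_left hcast (by positivity)))
  have hEq : (∑ k ∈ Finset.range n, X k ω) = GKS X 0 n ω := by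
    rw [GKS, Finset.range_eq_Ico]
  rw [hEq, Real.norm_eq_abs, abs_div, abs_of_pos hrpow, div_lt_iff₀ hrpow]
  calc |GKS X 0 n ω| ≤ (1 / ((m : ℝ) + 1)) * (n : ℝ) ^ α := hfin
    _ < ε * (n : ℝ) ^ α := mul_lt_mul_of_pos_right hm hrpow
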